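/- Under Assumption 1 and Assumption 2, if α < 1/(βM) and αβm ≤ 1, then for all θ, θ' ∈ Θ the ratio of proposal normalizing constants satisfies Z_{α,β}(θ) / Z_{α,β}(θ') ≥ exp(β(U(θ') − U(θ))) / exp((1/2)(1/α − βm)·diam(Θ)²). -/

import Mathlib

open scoped RealInnerProductSpace BigOperators
open Classical

lemma descent_lemma {E : Type*} [NormedAddCommGroup E] [InnerProductSpace ℝ E] [CompleteSpace E]
    (U : E → ℝ) (g : E → E) (hg : ∀ x, HasGradientAt U (g x) x)
    (M : ℝ) (hM : 0 ≤ M) (hLip : ∀ x y, ‖g x - g y‖ ≤ M * ‖x - y‖)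
    (x y : E) : U y ≤ U x + ⟪g x, y - x⟫ + M / 2 * ‖y - x‖ ^ 2 := by
  set v := y - x with hv
  have hγ : ∀ t : ℝ, HasDerivAt (fun t : ℝ => x + t • v) v t := by
    intro t
    simpa using ((hasDerivAt_id t).smul_const v).const_add x
  have hφ : ∀ t : ℝ, HasDerivAt (fun t : ℝ => U (x + t • v)) ⟪g (x + t • v), v⟫ t := by
    intro t
    have h1 := ((hg (x + t • v)).hasFDerivAt).comp_hasDerivAt t (hγ t)
    simp at h1; exact h1
  have hgc : Continuous g := by
    have : LipschitzWith (Real.toNNReal M) g := by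
      refine LipschitzWith.of_dist_le_mul fun a b => ?_
      simp only [dist_eq_norm]
      calc ‖g a - g b‖ ≤ M * ‖a - b‖ := hLip a b
      _ ≤ Real.toNNReal M * ‖a - b‖ := by
          gcongr; exact (Real.le_coe_toNNReal M)
    exact this.continuous
  have hcont : Continuous fun t : ℝ => ⟪g (x + t • v), v⟫ := by
    apply Continuous.inner
    · exact hgc.comp (by continuity)
    · exact continuous_const
  have hftc : ∫ t in (0:ℝ)..1, ⟪g (x + t • v), v⟫ = U y - U x := by
    have := intervalIntegral.integral_eq_sub_of_hasDerivAt
      (f := fun t : ℝ => U (x + t • v)) (f' := fun t => ⟪g (x + t • v), v⟫)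
      (fun t _ => hφ t) (hcont.intervalIntegrable 0 1)
    simpa [hv] using this
  have hbound : ∀ t ∈ Set.Icc (0:ℝ) 1,
      ⟪g (x + t • v), v⟫ ≤ ⟪g x, v⟫ + M * t * ‖v‖ ^ 2 := by
    intro t ht
    have h1 : ⟪g (x + t • v), v⟫ = ⟪g x, v⟫ + ⟪g (x + t • v) - g x, v⟫ := by
      rw [inner_sub_left]; ring
    rw [h1]
    have h2 : ⟪g (x + t • v) - g x, v⟫ ≤ ‖g (x + t • v) - g x‖ * ‖v‖ :=
      real_inner_le_norm _ _
    have h3 : ‖g (x + t • v) - g x‖ ≤ M * (t * ‖v‖) := by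
      have := hLip (x + t • v) x
      simpa [norm_smul, abs_of_nonneg ht.1, mul_assoc] using this
    nlinarith [norm_nonneg v, norm_nonneg (g (x + t • v) - g x), ht.1, sq_nonneg ‖v‖]
  have hint : ∫ t in (0:ℝ)..1, ⟪g (x + t • v), v⟫
      ≤ ∫ t in (0:ℝ)..1, (⟪g x, v⟫ + M * t * ‖v‖ ^ 2) := by
    apply intervalIntegral.integral_mono_on zero_le_one
      (hcont.intervalIntegrable 0 1)
      ((by continuity : Continuous fun t : ℝ => ⟪g x, v⟫ + M * t * ‖v‖ ^ 2).intervalIntegrable 0 1)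
    exact hbound
  have hval : ∫ t in (0:ℝ)..1, (⟪g x, v⟫ + M * t * ‖v‖ ^ 2)
      = ⟪g x, v⟫ + M / 2 * ‖v‖ ^ 2 := by
    have h1 : ∫ t in (0:ℝ)..1, (⟪g x, v⟫ + M * t * ‖v‖ ^ 2)
        = ∫ t in (0:ℝ)..1, (⟪g x, v⟫ + (M * ‖v‖ ^ 2) * t) := by
      congr 1; ext t; ring
    rw [h1, intervalIntegral.integral_add (intervalIntegrable_const)
      ((intervalIntegral.intervalIntegrable_id).const_mul _),
      intervalIntegral.integral_const_mul, integral_id]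
    simp; ring
  have := hftc ▸ (hint.trans_eq hval)
  linarith


/-- under Assumptions 1 and 2, if α < 1/(βM) and αβm ≤ 1, then for all
θ, θ' ∈ Θ the ratio of proposal normalizing constants satisfies
Z_{α,β}(θ)/Z_{α,β}(θ') ≥ exp(β(U(θ') − U(θ))) / exp((1/2)(1/α − βm)·diam(Θ)²). -/
theorem proposal_normalizer_ratio_bound
    {d : ℕ} (hd : 1 ≤ d)
    (Θ : Finset (EuclideanSpace ℝ (Fin d))) (hΘ : Θ.Nonempty)
    (U : EuclideanSpace ℝ (Fin d) → ℝ) (hU : ContDiff ℝ 2 U)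
    (gradU : EuclideanSpace ℝ (Fin d) → EuclideanSpace ℝ (Fin d))
    (hgrad : ∀ x, HasGradientAt U (gradU x) x)
    -- Assumption 1: ∇U is M-Lipschitz
    (M : ℝ) (hM : 0 < M)
    (hLip : ∀ x y, ‖gradU x - gradU y‖ ≤ M * ‖x - y‖)
    -- Assumption 2: U is m-strongly concave on the convex hull of Θ
    (m : ℝ) (hm : 0 < m)
    (hconc : ∀ x ∈ convexHull ℝ (Θ : Set (EuclideanSpace ℝ (Fin d))),
      ∀ y ∈ convexHull ℝ (Θ : Set (EuclideanSpace ℝ (Fin d))),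
        U y ≤ U x + ⟪gradU x, y - x⟫ - (m / 2) * ‖y - x‖ ^ 2)
    -- step size and balancing parameter
    (α β : ℝ) (hα : 0 < α) (hβ0 : 0 < β) (hβ1 : β ≤ 1)
    (hαβM : α < 1 / (β * M)) (hαβm : α * β * m ≤ 1)
    -- the proposal normalizing constant Z_{α,β}
    (Zc : EuclideanSpace ℝ (Fin d) → ℝ)
    (hZc : ∀ θ, Zc θ =
      ∑ x ∈ Θ, Real.exp (β * ⟪gradU θ, x - θ⟫ - ‖x - θ‖ ^ 2 / (2 * α)))
    -- diam(Θ)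
    (D : ℝ) (hD : IsGreatest {r : ℝ | ∃ θ ∈ Θ, ∃ θ' ∈ Θ, r = ‖θ - θ'‖} D)
 :
    ∀ θ ∈ Θ, ∀ θ' ∈ Θ,
      Real.exp (β * (U θ' - U θ)) / Real.exp ((1 / 2) * (1 / α - β * m) * D ^ 2)
        ≤ Zc θ / Zc θ' := by
  intro θ hθ θ' hθ'
  -- basic positivity and bounds
  have hDnn : 0 ≤ D := by
    obtain ⟨a, ha, b, hb, hab⟩ := hD.1
    rw [hab]; exact norm_nonneg _
  have hDub : ∀ a ∈ Θ, ∀ b ∈ Θ, ‖a - b‖ ≤ D := fun a ha b hb =>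
    hD.2 ⟨a, ha, b, hb, rfl⟩
  have hβm : β * m ≤ 1 / α := by
    rw [le_div_iff₀ hα]; nlinarith
  have hβM : β * M < 1 / α := by
    have hβMpos : 0 < β * M := mul_pos hβ0 hM
    rw [lt_div_iff₀ hα]
    calc β * M * α = α * (β * M) := by ring
    _ < (1 / (β * M)) * (β * M) := by gcongr
    _ = 1 := by field_simp
  set c : ℝ := (1 / 2) * (1 / α - β * m) * D ^ 2 with hc
  have hcnn : 0 ≤ c := by
    apply mul_nonneg (mul_nonneg (by norm_num) (by linarith)) (sq_nonneg D)
  -- the reverse descent inequality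
  have hdesc : ∀ x y : EuclideanSpace ℝ (Fin d),
      ⟪gradU x, y - x⟫ ≤ U y - U x + M / 2 * ‖y - x‖ ^ 2 := by
    intro x y
    have hneg : ∀ z, HasGradientAt (fun w => -U w) (-(gradU z)) z := by
      intro z
      rw [hasGradientAt_iff_hasFDerivAt, map_neg]
      exact (hasGradientAt_iff_hasFDerivAt.mp (hgrad z)).neg
    have hLip' : ∀ a b : EuclideanSpace ℝ (Fin d),
        ‖-(gradU a) - -(gradU b)‖ ≤ M * ‖a - b‖ := by
      intro a b
      have : -(gradU a) - -(gradU b) = -(gradU a - gradU b) := by abel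
      rw [this, norm_neg]; exact hLip a b
    have := descent_lemma (fun w => -U w) (fun z => -(gradU z)) hneg M hM.le hLip' x y
    simp only [inner_neg_left] at this
    linarith
  -- sum of exp(β U x)
  set S : ℝ := ∑ x ∈ Θ, Real.exp (β * U x) with hS
  have hSpos : 0 < S := Finset.sum_pos (fun x _ => Real.exp_pos _) hΘ
  have hsubhull : (Θ : Set (EuclideanSpace ℝ (Fin d))) ⊆
      convexHull ℝ (Θ : Set (EuclideanSpace ℝ (Fin d))) := subset_convexHull ℝ _
  -- lower bound on Zc θ
  have hlow : Real.exp (-(β * U θ) - c) * S ≤ Zc θ := by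
    rw [hZc θ, hS, Finset.mul_sum]
    apply Finset.sum_le_sum
    intro x hx
    rw [← Real.exp_add]
    apply Real.exp_le_exp.mpr
    have h1 := hconc θ (hsubhull hθ) x (hsubhull hx)
    have h2 : ‖x - θ‖ ≤ D := hDub x hx θ hθ
    have h3 : 0 ≤ ‖x - θ‖ := norm_nonneg _
    have h4 : ‖x - θ‖ ^ 2 ≤ D ^ 2 := by nlinarith
    have h5 : (1 / α - β * m) * ‖x - θ‖ ^ 2 ≤ (1 / α - β * m) * D ^ 2 := by
      apply mul_le_mul_of_nonneg_left h4 (by linarith)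
    have h6 : β * (U x) ≤ β * (U θ + ⟪gradU θ, x - θ⟫ - (m / 2) * ‖x - θ‖ ^ 2) :=
      mul_le_mul_of_nonneg_left h1 hβ0.le
    have hαinv : ‖x - θ‖ ^ 2 / (2 * α) = (1 / α) * ‖x - θ‖ ^ 2 / 2 := by
      field_simp
    rw [hc]
    nlinarith
  -- upper bound on Zc θ'
  have hupp : Zc θ' ≤ Real.exp (-(β * U θ')) * S := by
    rw [hZc θ', hS, Finset.mul_sum]
    apply Finset.sum_le_sum
    intro x hx
    rw [← Real.exp_add]
    apply Real.exp_le_exp.mpr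
    have h1 := hdesc θ' x
    have h6 : β * ⟪gradU θ', x - θ'⟫ ≤ β * (U x - U θ' + M / 2 * ‖x - θ'‖ ^ 2) :=
      mul_le_mul_of_nonneg_left h1 hβ0.le
    have hn : 0 ≤ ‖x - θ'‖ ^ 2 := sq_nonneg _
    have hq : β * (M / 2) * ‖x - θ'‖ ^ 2 ≤ (1 / α) * ‖x - θ'‖ ^ 2 / 2 := by
      nlinarith
    have hαinv : ‖x - θ'‖ ^ 2 / (2 * α) = (1 / α) * ‖x - θ'‖ ^ 2 / 2 := by
      field_simp
    nlinarith
  have hZθ'pos : 0 < Zc θ' := by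
    rw [hZc θ']
    exact Finset.sum_pos (fun x _ => Real.exp_pos _) hΘ
  rw [div_le_div_iff₀ (Real.exp_pos _) hZθ'pos]
  calc Real.exp (β * (U θ' - U θ)) * Zc θ'
      ≤ Real.exp (β * (U θ' - U θ)) * (Real.exp (-(β * U θ')) * S) := by
        apply mul_le_mul_of_nonneg_left hupp (Real.exp_pos _).le
    _ = Real.exp (-(β * U θ) - c) * S * Real.exp c := by
        rw [← mul_assoc, ← Real.exp_add,
          show β * (U θ' - U θ) + -(β * U θ') = (-(β * U θ) - c) + c from by ring,
          Real.exp_add]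
        ring
    _ ≤ Zc θ * Real.exp c := by
        apply mul_le_mul_of_nonneg_right hlow (Real.exp_pos _).le
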